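/- Let k < n be positive integers, K a field, 0 ≤ ℓ ≤ n, and v ≤ w in I_{k,n}. The restricted ideal G_{k,n,ℓ}|_w^v = ker(φ_ℓ)|_{T_w^v} coincides with the kernel ker(φ_ℓ|_w^v) of the restricted monomial map if and only if G_{k,n,ℓ}|_w^v is monomial-free. -/

import Mathlib

open MvPolynomial

/-- `IsIdx n k J` : `J` is a strictly increasing `k`-tuple with entries in `{1, …, n}`,
representing an element `{J 0 < J 1 < … < J (k-1)}` of `I_{k,n}`. -/
def IsIdx (n k : ℕ) (J : Fin k → ℕ) : Prop :=
  StrictMono J ∧ ∀ s, 1 ≤ J s ∧ J s ≤ n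

/-- Componentwise (Bruhat) order on sorted tuples. -/
def TupLe {k : ℕ} (I J : Fin k → ℕ) : Prop := ∀ s, I s ≤ J s

/-- Index type of the Plücker variables `P_I`, `I ∈ I_{k,n}`. -/
def PlVar (n k : ℕ) : Type := {J : Fin k → ℕ // IsIdx n k J}

/-- The number of entries of `J` lying in `{1, …, ℓ}`. -/
def nSmall {k : ℕ} (ℓ : ℕ) (J : Fin k → ℕ) : ℕ :=
  (Finset.univ.filter fun s => J s ≤ ℓ).card

/-- Row assignment of the block diagonal matching field `B_ℓ` : the entry of `J` in sorted
position `i` (0-indexed) is placed in this (1-indexed) row. -/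
def mfRow {k : ℕ} (ℓ : ℕ) (J : Fin k → ℕ) (i : Fin k) : ℕ :=
  if 2 ≤ k ∧ nSmall ℓ J = 1 then
    (if (i : ℕ) = 0 then 2 else if (i : ℕ) = 1 then 1 else (i : ℕ) + 1)
  else (i : ℕ) + 1

/-- The monomial map `φ_ℓ` of the block diagonal matching field `B_ℓ`. -/
noncomputable def phiMF (K : Type*) [Field K] (n k ℓ : ℕ) :
    MvPolynomial (PlVar n k) K →ₐ[K] MvPolynomial (ℕ × ℕ) K :=
  aeval fun J => ∏ i : Fin k, X (mfRow ℓ J.val i, J.val i)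

/-- The Plücker map, sending `P_J` to the `k × k` minor on columns `J`
of the generic matrix `(x_{i,j})`. -/
noncomputable def pluMap (K : Type*) [Field K] (n k : ℕ) :
    MvPolynomial (PlVar n k) K →ₐ[K] MvPolynomial (ℕ × ℕ) K :=
  aeval fun J =>
    (Matrix.of fun r c : Fin k => (X ((r : ℕ) + 1, J.val c) : MvPolynomial (ℕ × ℕ) K)).det

/-- Restriction `G|_T = (G + ⟨P_I : I ∉ T⟩) ∩ K[P_I : I ∈ T]` of an ideal to the
variables indexed by `T`. -/
noncomputable def restrictIdeal {K : Type*} [Field K] {n k : ℕ}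
    (G : Ideal (MvPolynomial (PlVar n k) K)) (T : Set (PlVar n k)) :
    Ideal (MvPolynomial T K) :=
  Ideal.comap (rename fun x : T => (x : PlVar n k))
    (G ⊔ Ideal.span (X '' {J | J ∉ T}))

/-- An ideal of a polynomial ring is monomial-free if it contains no monomial. -/
def MonomialFree {K : Type*} [Field K] {σ : Type*} (I : Ideal (MvPolynomial σ K)) : Prop :=
  ∀ m : σ →₀ ℕ, (monomial m (1 : K)) ∉ I

/-- `T_w^v = {I ∈ I_{k,n} : v ≤ I ≤ w}`. -/
def TWV {n k : ℕ} (v w : PlVar n k) : Set (PlVar n k) :=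
  {J | TupLe v.val J.val ∧ TupLe J.val w.val}

/-- `{I ∈ I_{k,n} : I ≤ w}`. -/
def TleW {n k : ℕ} (w : PlVar n k) : Set (PlVar n k) := {J | TupLe J.val w.val}

/-- `{I ∈ I_{k,n} : v ≤ I}`. -/
def TgeV {n k : ℕ} (v : PlVar n k) : Set (PlVar n k) := {J | TupLe v.val J.val}

/-- The weight matrix `M_ℓ` (rows and columns 1-indexed). -/
def Mmat (n ℓ : ℕ) (i j : ℕ) : ℤ :=
  if i = 2 then (if j ≤ ℓ then (ℓ : ℤ) - j + 1 else (n : ℤ) - j + ℓ + 1)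
  else ((i : ℤ) - 1) * ((n : ℤ) - j + 1)

/-- The weight `w_ℓ(P_J)` induced by `M_ℓ` on the Plücker variable `P_J`. -/
def wVec (n ℓ : ℕ) {k : ℕ} (J : Fin k → ℕ) : ℤ :=
  ∑ i : Fin k, Mmat n ℓ (mfRow ℓ J i) (J i)

/-- Weight of an exponent vector with respect to a weight vector `u`. -/
def expWt {σ : Type*} (u : σ → ℤ) (m : σ →₀ ℕ) : ℤ := m.sum fun i e => u i * (e : ℤ)

/-- Initial form of a polynomial: the sum of its terms of minimal `u`-weight. -/
noncomputable def initialForm {K σ : Type*} [Field K] (u : σ → ℤ) (f : MvPolynomial σ K) :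
    MvPolynomial σ K :=
  ∑ m ∈ f.support.filter (fun m => ∀ m' ∈ f.support, expWt u m ≤ expWt u m'),
    monomial m (coeff m f)

/-- Initial ideal with respect to the weight vector `u`. -/
noncomputable def initialIdeal {K σ : Type*} [Field K] (u : σ → ℤ)
    (I : Ideal (MvPolynomial σ K)) : Ideal (MvPolynomial σ K) :=
  Ideal.span {g | ∃ f ∈ I, g = initialForm u f}

/-- `w_0 I = {n + 1 - i : i ∈ I}`, as a sorted tuple. -/
def w0t (n : ℕ) {k : ℕ} (I : Fin k → ℕ) : Fin k → ℕ :=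
  fun s => n + 1 - I ⟨k - 1 - (s : ℕ), by have := s.isLt; omega⟩

/-- Membership in `Z_{k,n}` : either `J = {1, …, k-1, i}` with `k ≤ i ≤ n`,
or `J = {1, …, k+1} \\ {i}` with `1 ≤ i ≤ k-1`. -/
def ZPred (n k : ℕ) (J : Fin k → ℕ) : Prop :=
  (∃ i, k ≤ i ∧ i ≤ n ∧
    ∀ s : Fin k, J s = if (s : ℕ) + 1 < k then (s : ℕ) + 1 else i) ∨
  (∃ i, 1 ≤ i ∧ i ≤ k - 1 ∧
    ∀ s : Fin k, J s = if (s : ℕ) + 1 < i then (s : ℕ) + 1 else (s : ℕ) + 2)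

/-- A two-column semi-standard Young tableau with columns `I`, `J`. -/
def SSYT (n k : ℕ) (I J : Fin k → ℕ) : Prop :=
  IsIdx n k I ∧ IsIdx n k J ∧ ∀ s, I s ≤ J s

/-- The map `Γ_ℓ` on two-column semi-standard Young tableaux (columns as sorted tuples). -/
def Gamma (ℓ : ℕ) {k : ℕ} (I J : Fin k → ℕ) : (Fin k → ℕ) × (Fin k → ℕ) :=
  if h : 2 ≤ k then
    let i0 := I ⟨0, by omega⟩
    let i1 := I ⟨1, by omega⟩
    let j0 := J ⟨0, by omega⟩
    let j1 := J ⟨1, by omega⟩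
    if (i0 ≤ ℓ ∧ i1 ≤ ℓ ∧ j0 ≤ ℓ ∧ ℓ < j1 ∧ i0 < j0 ∧ j0 < i1) ∨
       (i0 ≤ ℓ ∧ ℓ < i1 ∧ ℓ < j0 ∧ ℓ < j1 ∧ j0 < i1 ∧ i1 < j1) then
      ((fun s => if (s : ℕ) = 0 then j0 else I s), (fun s => if (s : ℕ) = 0 then i0 else J s))
    else (I, J)
  else (I, J)

/-- A column (a `k`-subset given as a sorted tuple) displayed in `B_ℓ`-order:
when `k ≥ 2` and exactly one entry is `≤ ℓ`, the two smallest entries are swapped. -/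
def rowArrange (ℓ : ℕ) {k : ℕ} (C : Fin k → ℕ) : Fin k → ℕ :=
  if h : 2 ≤ k then
    (if nSmall ℓ C = 1 then
      fun s => if (s : ℕ) = 0 then C ⟨1, by omega⟩
        else if (s : ℕ) = 1 then C ⟨0, by omega⟩ else C s
    else C)
  else C

/-- Two two-column tableaux (with columns `A,B` resp. `C,D`) are row-wise equal. -/
def rowEq {k : ℕ} (A B C D : Fin k → ℕ) : Prop :=
  ∀ s, ({A s, B s} : Multiset ℕ) = {C s, D s}

/-- The kernel of the restricted monomial map `φ_ℓ|_T`. -/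
noncomputable def kerPhiRes (K : Type*) [Field K] (n k ℓ : ℕ) (T : Set (PlVar n k)) :
    Ideal (MvPolynomial T K) :=
  RingHom.ker ((phiMF K n k ℓ).comp (rename fun x : T => (x : PlVar n k)))

/-- The ideal `I(X_w^v)` of the Richardson variety: the restriction of the
Plücker ideal `G_{k,n}` to the variables in `T_w^v`. -/
noncomputable def richIdeal (K : Type*) [Field K] (n k : ℕ) (v w : PlVar n k) :
    Ideal (MvPolynomial (TWV v w) K) :=
  restrictIdeal (RingHom.ker (pluMap K n k)) (TWV v w)


namespace Stmt16Aux

open Finsupp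

variable {K : Type*} [Field K] {σ τ ι : Type*}

theorem prod_monomial_one [DecidableEq ι] (s : Finset ι) (f : ι → (τ →₀ ℕ)) :
    (∏ i ∈ s, monomial (f i) (1 : K)) = monomial (∑ i ∈ s, f i) 1 := by
  induction s using Finset.induction_on with
  | empty => simp
  | insert _ _ hns ih =>
      rw [Finset.prod_insert hns, ih, monomial_mul, Finset.sum_insert hns, one_mul]

/-- Exponent image of a monomial map given by `j ↦ x^(g j)`. -/
noncomputable def expImg (g : σ → (τ →₀ ℕ)) (μ : σ →₀ ℕ) : τ →₀ ℕ := μ.sum fun j e => e • g j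

theorem aeval_mono_monomial (g : σ → (τ →₀ ℕ)) (μ : σ →₀ ℕ) (c : K) :
    aeval (fun j => monomial (g j) (1 : K)) (monomial μ c) = monomial (expImg g μ) c := by
  classical
  rw [aeval_monomial]
  have h1 : (μ.prod fun n e => (monomial (g n) (1 : K)) ^ e)
      = monomial (expImg g μ) (1 : K) := by
    rw [Finsupp.prod]
    have : ∀ n ∈ μ.support, (monomial (g n) (1 : K)) ^ μ n
        = monomial (μ n • g n) (1 : K) := by
      intro n _; rw [monomial_pow, one_pow]
    rw [Finset.prod_congr rfl this, prod_monomial_one]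
    rfl
  rw [h1]
  rw [show (algebraMap K (MvPolynomial τ K)) c = C c from rfl, C_mul_monomial, mul_one]

theorem mem_support_aeval_mono (g : σ → (τ →₀ ℕ)) (p : MvPolynomial σ K) (m : τ →₀ ℕ)
    (hm : m ∈ (aeval (fun j => monomial (g j) (1 : K)) p).support) :
    ∃ μ ∈ p.support, expImg g μ = m := by
  classical
  have h := MvPolynomial.mem_support_iff.mp hm
  rw [p.as_sum, map_sum] at h
  have h2 : (∑ μ ∈ p.support,
      coeff m (aeval (fun j => monomial (g j) (1 : K)) (monomial μ (coeff μ p)))) ≠ 0 := by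
    rw [← MvPolynomial.coeff_sum]; exact h
  obtain ⟨μ, hμ, hne⟩ := Finset.exists_ne_zero_of_sum_ne_zero h2
  refine ⟨μ, hμ, ?_⟩
  rw [aeval_mono_monomial, coeff_monomial] at hne
  by_contra hc
  simp [hc] at hne

end Stmt16Aux

/-- The exponent of the image monomial `φ_ℓ(P_J)`. -/
noncomputable def imgMon (n k ℓ : ℕ) (J : PlVar n k) : (ℕ × ℕ) →₀ ℕ :=
  ∑ i : Fin k, Finsupp.single (mfRow ℓ J.val i, J.val i) 1

theorem phiMF_eq_aeval (K : Type*) [Field K] (n k ℓ : ℕ) :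
    phiMF K n k ℓ = aeval (fun J => monomial (imgMon n k ℓ J) (1 : K)) := by
  classical
  unfold phiMF
  congr 1
  funext J
  have : ∀ i : Fin k, (X (mfRow ℓ J.val i, J.val i) : MvPolynomial (ℕ × ℕ) K)
      = monomial (Finsupp.single (mfRow ℓ J.val i, J.val i) 1) 1 := fun i => rfl
  rw [Finset.prod_congr rfl (fun i _ => this i), Stmt16Aux.prod_monomial_one]
  rfl

/-- The restricted ideal `G_{k,n,ℓ}|_w^v = ker(φ_ℓ)|_{T_w^v}` coincides
with the kernel `ker(φ_ℓ|_w^v)` of the restricted monomial map if and only if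
`G_{k,n,ℓ}|_w^v` is monomial-free. -/
theorem statement_16 (K : Type*) [Field K] (n k ℓ : ℕ) (hk : 0 < k) (hkn : k < n)
    (hℓn : ℓ ≤ n) (v w : PlVar n k) (hvw : TupLe v.val w.val) :
    restrictIdeal (RingHom.ker (phiMF K n k ℓ)) (TWV v w) = kerPhiRes K n k ℓ (TWV v w) ↔
      MonomialFree (restrictIdeal (RingHom.ker (phiMF K n k ℓ)) (TWV v w)) := by
  classical
  set T : Set (PlVar n k) := TWV v w with hT
  set g : PlVar n k → ((ℕ × ℕ) →₀ ℕ) := imgMon n k ℓ with hg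
  have hphi : phiMF K n k ℓ = aeval (fun J => monomial (g J) (1 : K)) :=
    phiMF_eq_aeval K n k ℓ
  -- the restricted map as an aeval of a monomial map
  have hpsi : ∀ p : MvPolynomial T K,
      phiMF K n k ℓ (rename (fun x : T => (x : PlVar n k)) p)
        = aeval (fun x : T => monomial ((g ∘ (fun x : T => (x : PlVar n k))) x) (1 : K)) p := by
    intro p
    rw [hphi, aeval_rename]
    rfl
  have hker : ∀ p : MvPolynomial T K, p ∈ kerPhiRes K n k ℓ T ↔
      phiMF K n k ℓ (rename (fun x : T => (x : PlVar n k)) p) = 0 := by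
    intro p
    rw [kerPhiRes, RingHom.mem_ker]
    simp
  have hres : ∀ p : MvPolynomial T K,
      p ∈ restrictIdeal (RingHom.ker (phiMF K n k ℓ)) T ↔
      rename (fun x : T => (x : PlVar n k)) p ∈
        (RingHom.ker (phiMF K n k ℓ) ⊔ Ideal.span (X '' {J | J ∉ T})) := by
    intro p; rfl
  constructor
  · -- equality → monomial-free
    intro heq m hm
    rw [heq] at hm
    rw [hker] at hm
    rw [hpsi] at hm
    rw [show (monomial m (1 : K)) = monomial m (1 : K) from rfl,
      Stmt16Aux.aeval_mono_monomial] at hm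
    exact one_ne_zero (MvPolynomial.monomial_eq_zero.mp hm)
  · -- monomial-free → equality
    intro hmf
    apply le_antisymm
    · -- restrictIdeal ≤ kerPhiRes
      intro f hf
      rw [hker]
      by_contra hne
      -- decompose rename f = g' + h
      rw [hres] at hf
      obtain ⟨g', hg', h, hh, hsum⟩ := Submodule.mem_sup.mp hf
      have hg'0 : phiMF K n k ℓ g' = 0 := RingHom.mem_ker.mp hg'
      have hfh : phiMF K n k ℓ (rename (fun x : T => (x : PlVar n k)) f)
          = phiMF K n k ℓ h := by
        rw [← hsum, map_add, hg'0, zero_add]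
      -- pick a monomial m in the support of the image
      obtain ⟨m, hm⟩ := MvPolynomial.ne_zero_iff.mp hne
      have hmsupp : m ∈ (phiMF K n k ℓ (rename (fun x : T => (x : PlVar n k)) f)).support :=
        MvPolynomial.mem_support_iff.mpr hm
      -- m comes from a monomial ν of h, divisible by an outside variable
      have hmsupp2 : m ∈ (phiMF K n k ℓ h).support := by rwa [hfh] at hmsupp
      rw [hphi] at hmsupp2
      obtain ⟨ν, hν, hνm⟩ := Stmt16Aux.mem_support_aeval_mono g h m hmsupp2
      obtain ⟨J, hJ, hJν⟩ :=
        (MvPolynomial.mem_ideal_span_X_image.mp hh) ν hν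
      -- m also comes from a monomial μ' of f
      have hmsupp3 : m ∈ (aeval (fun x : T =>
          monomial ((g ∘ (fun x : T => (x : PlVar n k))) x) (1 : K)) f).support := by
        rwa [hpsi] at hmsupp
      obtain ⟨μ', hμ', hμ'm⟩ :=
        Stmt16Aux.mem_support_aeval_mono (g ∘ (fun x : T => (x : PlVar n k))) f m hmsupp3
      -- the monomial μ' lies in the restricted ideal
      have hmono : (monomial μ' (1 : K)) ∈ restrictIdeal (RingHom.ker (phiMF K n k ℓ)) T := by
        rw [hres, rename_monomial]
        have hdiff : (monomial (μ'.mapDomain (fun x : T => (x : PlVar n k))) (1 : K)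
            - monomial ν 1) ∈ RingHom.ker (phiMF K n k ℓ) := by
          rw [RingHom.mem_ker, map_sub]
          have e1 : phiMF K n k ℓ
              (monomial (μ'.mapDomain (fun x : T => (x : PlVar n k))) (1 : K))
              = monomial m 1 := by
            rw [← rename_monomial, hpsi, Stmt16Aux.aeval_mono_monomial, hμ'm]
          have e2 : phiMF K n k ℓ (monomial ν (1 : K)) = monomial m 1 := by
            rw [hphi, Stmt16Aux.aeval_mono_monomial, hνm]
          rw [e1, e2, sub_self]
        have hspan : (monomial ν (1 : K)) ∈
            Ideal.span (X '' {J | J ∉ T} : Set (MvPolynomial (PlVar n k) K)) := by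
          rw [MvPolynomial.mem_ideal_span_X_image]
          intro m' hm'
          have : m' = ν := by
            rw [MvPolynomial.support_monomial, if_neg (one_ne_zero)] at hm'
            exact Finset.mem_singleton.mp hm'
          exact ⟨J, hJ, this ▸ hJν⟩
        have := Submodule.add_mem_sup hdiff hspan
        rwa [sub_add_cancel] at this
      exact hmf μ' hmono
    · -- kerPhiRes ≤ restrictIdeal
      intro f hf
      rw [hres]
      exact Ideal.mem_sup_left (RingHom.mem_ker.mpr ((hker f).mp hf))
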